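/- (Equilibrium integral identity, Lemma 1.3 and Lemma A.2.) For every γ ≥ 1 and every θ ∈ ℝ, the absolutely convergent improper integral (1/(4π))·∫₀^{2π} ln(M(0)(θ,θ'))·sin(θ'−θ) dθ' equals −(Ω_γ/2)·g_γ'(θ), where g_γ'(θ) = −(γ−γ⁻¹)·sin(2θ). Equivalently (since ∂²_{θθ'} sin(θ'−θ) = sin(θ'−θ)), (Ω_γ/2)·(d/dθ)g_γ(θ) + (1/(4π))·∫₀^{2π} ln(M(0)(θ,θ'))·∂²_{θθ'}sin(θ'−θ) dθ' = 0; that is, ξ = 0 is an equilibrium of the contour dynamics equation with angular velocity Ω_γ. -/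

import Mathlib

open Real MeasureTheory

/-- `Ω_γ := γ/(1+γ)²`. -/
noncomputable def OmG (γ : ℝ) : ℝ := γ / (1 + γ) ^ 2

/-- `g_γ(θ) := γ cos²θ + γ⁻¹ sin²θ`. -/
noncomputable def gell (γ θ : ℝ) : ℝ := γ * Real.cos θ ^ 2 + γ⁻¹ * Real.sin θ ^ 2

/-- `M(0)(θ,θ') := γ(cos θ − cos θ')² + γ⁻¹(sin θ − sin θ')²`. -/
noncomputable def M0 (γ θ θ' : ℝ) : ℝ :=
  γ * (Real.cos θ - Real.cos θ') ^ 2 + γ⁻¹ * (Real.sin θ - Real.sin θ') ^ 2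

section Aux

set_option linter.unusedSectionVars false

variable {p q : ℝ} (hq : 0 ≤ q) (hp : 0 < p) (hpq : p ^ 2 = 1 + q ^ 2)

include hq hp hpq in
lemma den_pos (ψ : ℝ) : 0 < p - q * Real.cos ψ := by
  nlinarith [Real.cos_le_one ψ, Real.neg_one_le_cos ψ, sq_nonneg (p - q), sq_nonneg (p + q)]

include hq hp hpq in
lemma den1_pos (ψ : ℝ) : 0 < 1 + p - q * Real.cos ψ := by
  have := den_pos hq hp hpq ψ; linarith

include hq hp hpq in
lemma hasDerivAt_Phi (hq0 : 0 < q) (ψ : ℝ) :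
    HasDerivAt (fun ψ => Real.sin ψ * Real.log (p - q * Real.cos ψ) - Real.sin ψ - (p/q) * ψ
        + (1/q) * (ψ + 2 * Real.arctan (q * Real.sin ψ / (1 + p - q * Real.cos ψ))))
      (Real.log (p - q * Real.cos ψ) * Real.cos ψ) ψ := by
  have hD := den_pos hq hp hpq ψ
  have hE := den1_pos hq hp hpq ψ
  have hs := Real.sin_sq_add_cos_sq ψ
  have hp1 : (0:ℝ) < 1 + p := by linarith
  have h1 : HasDerivAt (fun ψ : ℝ => p - q * Real.cos ψ) (q * Real.sin ψ) ψ := by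
    simpa using ((Real.hasDerivAt_cos ψ).const_mul q).const_sub p
  have hlog : HasDerivAt (fun ψ : ℝ => Real.log (p - q * Real.cos ψ))
      (q * Real.sin ψ / (p - q * Real.cos ψ)) ψ := h1.log hD.ne'
  have hterm1 := (Real.hasDerivAt_sin ψ).mul hlog
  have hu : HasDerivAt (fun ψ : ℝ => q * Real.sin ψ) (q * Real.cos ψ) ψ :=
    (Real.hasDerivAt_sin ψ).const_mul q
  have hv : HasDerivAt (fun ψ : ℝ => 1 + p - q * Real.cos ψ) (q * Real.sin ψ) ψ := by
    simpa using ((Real.hasDerivAt_cos ψ).const_mul q).const_sub (1 + p)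
  have hdiv := hu.div hv hE.ne'
  have harc := (Real.hasDerivAt_arctan (q * Real.sin ψ / (1 + p - q * Real.cos ψ))).comp ψ hdiv
  have H := ((hterm1.sub (Real.hasDerivAt_sin ψ)).sub ((hasDerivAt_id ψ).const_mul (p/q))).add
    (((hasDerivAt_id ψ).add (harc.const_mul 2)).const_mul (1/q))
  refine H.congr_deriv ?_
  symm
  have hE2 : (1 + p - q * Real.cos ψ)^2 + (q * Real.sin ψ)^2
      = 2 * (1+p) * (p - q * Real.cos ψ) := by
    linear_combination q^2 * hs - hpq
  have h2 : (1 : ℝ) + (q * Real.sin ψ / (1 + p - q * Real.cos ψ))^2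
      = (2 * (1+p) * (p - q * Real.cos ψ)) / (1 + p - q * Real.cos ψ)^2 := by
    field_simp
    linear_combination hE2
  rw [h2]
  have h3 : 1/((2*(1+p)*(p - q * Real.cos ψ))/(1 + p - q * Real.cos ψ)^2)
        * ((q * Real.cos ψ * (1 + p - q * Real.cos ψ) - q * Real.sin ψ * (q * Real.sin ψ))
            /(1 + p - q * Real.cos ψ)^2)
      = (q * Real.cos ψ * (1 + p - q * Real.cos ψ) - q * Real.sin ψ * (q * Real.sin ψ))
          /(2*(1+p)*(p - q * Real.cos ψ)) := by
    rw [one_div_div]; field_simp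
  rw [h3]
  have key : Real.sin ψ * (q * Real.sin ψ/(p - q * Real.cos ψ)) - Real.cos ψ - p/q
      + (1/q)*(1 + 2*((q * Real.cos ψ * (1 + p - q * Real.cos ψ)
          - q * Real.sin ψ * (q * Real.sin ψ))/(2*(1+p)*(p - q * Real.cos ψ)))) = 0 := by
    field_simp
    linear_combination (q^2*p) * hs + (-p) * hpq
  linear_combination -key

include hq hp hpq in
lemma cont_den : Continuous fun ψ : ℝ => Real.log (p - q * Real.cos ψ) * Real.cos ψ := by
  exact ((continuous_const.sub
      (continuous_const.mul Real.continuous_cos : Continuous fun ψ : ℝ => q * Real.cos ψ)).log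
    (fun ψ => (den_pos hq hp hpq ψ).ne')).mul Real.continuous_cos

include hq hp hpq in
lemma cont_den' : Continuous fun ψ : ℝ => Real.log (p - q * Real.cos ψ) * Real.sin ψ := by
  exact ((continuous_const.sub
      (continuous_const.mul Real.continuous_cos : Continuous fun ψ : ℝ => q * Real.cos ψ)).log
    (fun ψ => (den_pos hq hp hpq ψ).ne')).mul Real.continuous_sin

include hq hp hpq in
lemma C2_val : (∫ ψ in (0:ℝ)..(2*π), Real.log (p - q * Real.cos ψ) * Real.cos ψ)
    = -(2*π) * q / (p+1) := by
  rcases eq_or_lt_of_le hq with h0 | hq0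
  · simp only [← h0, zero_mul, sub_zero, neg_zero, zero_div]
    rw [intervalIntegral.integral_const_mul, integral_cos]
    simp
  · rw [intervalIntegral.integral_eq_sub_of_hasDerivAt
      (fun ψ _ => hasDerivAt_Phi hq hp hpq hq0 ψ)
      ((cont_den hq hp hpq).intervalIntegrable 0 (2*π))]
    have hp1 : p + 1 ≠ 0 := by positivity
    simp [Real.sin_two_pi, Real.cos_two_pi]
    field_simp
    linear_combination (-1) * hpq

include hq hp hpq in
lemma C1_val : (∫ ψ in (0:ℝ)..(2*π), Real.log (p - q * Real.cos ψ) * Real.sin ψ) = 0 := by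
  have h := intervalIntegral.integral_comp_sub_left
    (fun ψ => Real.log (p - q * Real.cos ψ) * Real.sin ψ) (2*π) (a := 0) (b := 2*π)
  have h2 : (fun x : ℝ => Real.log (p - q * Real.cos (2*π - x)) * Real.sin (2*π - x))
      = fun x : ℝ => -(Real.log (p - q * Real.cos x) * Real.sin x) := by
    funext x
    rw [show (2*π - x) = -x + 2*π by ring, Real.cos_add_two_pi, Real.sin_add_two_pi,
      Real.cos_neg, Real.sin_neg]
    ring
  rw [h2] at h
  rw [intervalIntegral.integral_neg] at h
  simp only [sub_self, sub_zero] at h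
  linarith [h]

/-- The odd singular part of the integrand. -/
noncomputable def Gfun (u : ℝ) : ℝ :=
  2 * Real.cos (u/2) * ((2 * Real.sin (u/2)) * Real.log (2 * Real.sin (u/2)))

lemma Gfun_cont : Continuous Gfun := by
  have h1 : Continuous fun u : ℝ => 2 * Real.sin (u/2) :=
    continuous_const.mul (Real.continuous_sin.comp (continuous_id.div_const 2))
  have h2 : Continuous fun u : ℝ => 2 * Real.cos (u/2) :=
    continuous_const.mul (Real.continuous_cos.comp (continuous_id.div_const 2))
  exact h2.mul (Real.continuous_mul_log.comp h1)

lemma Gfun_periodic : Function.Periodic Gfun (2*π) := by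
  intro u
  unfold Gfun
  rw [show (u + 2*π)/2 = u/2 + π by ring, Real.cos_add_pi, Real.sin_add_pi,
    show (2:ℝ) * -Real.sin (u/2) = -(2 * Real.sin (u/2)) by ring, Real.log_neg_eq_log]
  ring

lemma Gfun_odd (u : ℝ) : Gfun (-u) = - Gfun u := by
  unfold Gfun
  rw [show (-u)/2 = -(u/2) by ring, Real.cos_neg, Real.sin_neg,
    show (2:ℝ) * -Real.sin (u/2) = -(2 * Real.sin (u/2)) by ring, Real.log_neg_eq_log]
  ring

lemma Gfun_integral_zero (a : ℝ) : (∫ u in a..(a + 2*π), Gfun u) = 0 := by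
  rw [Gfun_periodic.intervalIntegral_add_eq a (-π)]
  have hb : -π + 2*π = π := by ring
  rw [hb]
  have h := intervalIntegral.integral_comp_neg Gfun (a := -π) (b := π)
  simp only [neg_neg] at h
  have h2 : (fun x : ℝ => Gfun (-x)) = fun x => -(Gfun x) := funext Gfun_odd
  rw [h2, intervalIntegral.integral_neg] at h
  linarith [h]

end Aux

lemma point_id (γ : ℝ) (hγ : 1 ≤ γ) (θ θ' : ℝ) :
    Real.log (M0 γ θ θ') * Real.sin (θ' - θ)
      = Gfun (θ' - θ)
        + Real.log ((γ+γ⁻¹)/2 - (γ-γ⁻¹)/2 * Real.cos (θ+θ')) * Real.sin (θ'-θ) := by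
  have hγ0 : (0:ℝ) < γ := lt_of_lt_of_le one_pos hγ
  have hγi : γ⁻¹ ≤ 1 := inv_le_one_of_one_le₀ hγ
  have hγi0 : 0 < γ⁻¹ := inv_pos.mpr hγ0
  have hq : 0 ≤ (γ-γ⁻¹)/2 := by linarith
  have hp : 0 < (γ+γ⁻¹)/2 := by linarith
  have hpq : ((γ+γ⁻¹)/2) ^ 2 = 1 + ((γ-γ⁻¹)/2) ^ 2 := by
    have : γ * γ⁻¹ = 1 := mul_inv_cancel₀ hγ0.ne'
    linear_combination this
  have hL := den_pos hq hp hpq (θ + θ')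
  have h1 := Real.sin_sq_add_cos_sq ((θ+θ')/2)
  have hM : M0 γ θ θ' = (2*Real.sin ((θ'-θ)/2))^2
      * ((γ+γ⁻¹)/2 - (γ-γ⁻¹)/2 * Real.cos (θ+θ')) := by
    rw [M0, Real.cos_sub_cos, Real.sin_sub_sin]
    have h2 : Real.cos (θ+θ') = 1 - 2 * Real.sin ((θ+θ')/2)^2 := by
      have hc := Real.cos_two_mul ((θ+θ')/2)
      rw [show 2*((θ+θ')/2) = θ+θ' by ring] at hc
      linarith [h1, hc]
    have h3 : Real.sin ((θ-θ')/2) = -Real.sin ((θ'-θ)/2) := by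
      rw [show (θ-θ')/2 = -((θ'-θ)/2) by ring, Real.sin_neg]
    rw [h2, h3]
    linear_combination (4*γ⁻¹*Real.sin ((θ'-θ)/2)^2) * h1
  have hsin : Real.sin (θ' - θ) = 2 * Real.sin ((θ'-θ)/2) * Real.cos ((θ'-θ)/2) := by
    have hc := Real.sin_two_mul ((θ'-θ)/2)
    rw [show 2*((θ'-θ)/2) = θ'-θ by ring] at hc
    exact hc
  by_cases hs0 : Real.sin ((θ'-θ)/2) = 0
  · rw [hsin, hs0]
    unfold Gfun
    rw [hs0]
    ring
  · have h2s : (2*Real.sin ((θ'-θ)/2)) ≠ 0 := mul_ne_zero two_ne_zero hs0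
    have h2s2 : (2*Real.sin ((θ'-θ)/2))^2 ≠ 0 := pow_ne_zero 2 h2s
    rw [hM, Real.log_mul h2s2 hL.ne', Real.log_pow, hsin]
    unfold Gfun
    push_cast
    ring

theorem equilibrium_identity (γ : ℝ) (hγ : 1 ≤ γ) (θ : ℝ) :
    -- the improper integral is absolutely convergent
    IntervalIntegrable (fun θ' => Real.log (M0 γ θ θ') * Real.sin (θ' - θ))
      volume 0 (2 * π) ∧
    -- g_γ'(θ) = −(γ−γ⁻¹) sin(2θ)
    deriv (gell γ) θ = -(γ - γ⁻¹) * Real.sin (2 * θ) ∧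
    -- value of the singular integral
    (1 / (4 * π)) * (∫ θ' in (0:ℝ)..(2 * π), Real.log (M0 γ θ θ') * Real.sin (θ' - θ))
      = -(OmG γ / 2) * deriv (gell γ) θ ∧
    -- equivalently, using ∂²_{θθ'} sin(θ'−θ)
    (OmG γ / 2) * deriv (gell γ) θ +
        (1 / (4 * π)) *
          (∫ θ' in (0:ℝ)..(2 * π),
            Real.log (M0 γ θ θ') *
              deriv (fun a => deriv (fun b => Real.sin (b - a)) θ') θ)
      = 0 := by
  have hγ0 : (0:ℝ) < γ := lt_of_lt_of_le one_pos hγ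
  have hγi : γ⁻¹ ≤ 1 := inv_le_one_of_one_le₀ hγ
  have hγi0 : 0 < γ⁻¹ := inv_pos.mpr hγ0
  set p : ℝ := (γ+γ⁻¹)/2 with hpdef
  set q : ℝ := (γ-γ⁻¹)/2 with hqdef
  have hq : 0 ≤ q := by rw [hqdef]; linarith
  have hp : 0 < p := by rw [hpdef]; linarith
  have hpq : p ^ 2 = 1 + q ^ 2 := by
    have : γ * γ⁻¹ = 1 := mul_inv_cancel₀ hγ0.ne'
    rw [hpdef, hqdef]; linear_combination this
  -- pointwise identity
  have hid : (fun θ' => Real.log (M0 γ θ θ') * Real.sin (θ' - θ))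
      = fun θ' => Gfun (θ' - θ) + Real.log (p - q * Real.cos (θ+θ')) * Real.sin (θ'-θ) :=
    funext (fun θ' => point_id γ hγ θ θ')
  -- continuity of the two pieces
  have hcont1 : Continuous fun θ' : ℝ => Gfun (θ' - θ) :=
    Gfun_cont.comp (continuous_id.sub continuous_const)
  have hcont2 : Continuous fun θ' : ℝ => Real.log (p - q * Real.cos (θ+θ')) * Real.sin (θ'-θ) := by
    refine Continuous.mul ?_ (Real.continuous_sin.comp (continuous_id.sub continuous_const))
    refine Continuous.log ?_ (fun x => (den_pos hq hp hpq (θ + x)).ne')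
    exact continuous_const.sub (continuous_const.mul
      (Real.continuous_cos.comp (continuous_const.add continuous_id)))
  -- conjunct 1
  have conj1 : IntervalIntegrable (fun θ' => Real.log (M0 γ θ θ') * Real.sin (θ' - θ))
      volume 0 (2 * π) := by
    rw [hid]
    exact (hcont1.add hcont2).intervalIntegrable 0 (2*π)
  -- value of the integral
  have hJ : (∫ θ' in (0:ℝ)..(2 * π), Real.log (M0 γ θ θ') * Real.sin (θ' - θ))
      = 2*π*q/(p+1) * Real.sin (2*θ) := by
    rw [hid, intervalIntegral.integral_add (hcont1.intervalIntegrable 0 (2*π))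
      (hcont2.intervalIntegrable 0 (2*π))]
    have hG : (∫ θ' in (0:ℝ)..(2*π), Gfun (θ' - θ)) = 0 := by
      rw [intervalIntegral.integral_comp_sub_right Gfun θ,
        show 2*π - θ = (0 - θ) + 2*π by ring]
      exact Gfun_integral_zero (0 - θ)
    rw [hG]
    have e2 : (fun θ' : ℝ => Real.log (p - q*Real.cos (θ+θ')) * Real.sin (θ'-θ))
        = fun θ' : ℝ =>
          (fun ψ => Real.log (p - q*Real.cos ψ) * Real.sin (ψ - 2*θ)) (θ' + θ) := by
      funext x
      simp only
      rw [show x + θ - 2*θ = x - θ by ring, add_comm θ x]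
    rw [e2, intervalIntegral.integral_comp_add_right
      (fun ψ => Real.log (p - q*Real.cos ψ) * Real.sin (ψ - 2*θ)) θ]
    have hper : Function.Periodic
        (fun ψ => Real.log (p - q*Real.cos ψ) * Real.sin (ψ - 2*θ)) (2*π) := by
      intro x
      simp only
      rw [Real.cos_add_two_pi, show x + 2*π - 2*θ = (x - 2*θ) + 2*π by ring,
        Real.sin_add_two_pi]
    rw [show (0:ℝ)+θ = θ by ring, show 2*π+θ = θ + 2*π by ring,
      hper.intervalIntegral_add_eq θ 0, zero_add]
    have e3 : (fun ψ : ℝ => Real.log (p - q*Real.cos ψ) * Real.sin (ψ - 2*θ))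
        = fun ψ : ℝ => Real.cos (2*θ) * (Real.log (p - q*Real.cos ψ) * Real.sin ψ)
          - Real.sin (2*θ) * (Real.log (p - q*Real.cos ψ) * Real.cos ψ) := by
      funext ψ
      rw [Real.sin_sub]
      ring
    rw [e3]
    simp only [zero_add]
    rw [intervalIntegral.integral_sub
        (f := fun ψ : ℝ => Real.cos (2*θ) * (Real.log (p - q*Real.cos ψ) * Real.sin ψ))
        (g := fun ψ : ℝ => Real.sin (2*θ) * (Real.log (p - q*Real.cos ψ) * Real.cos ψ))
        ((continuous_const.mul (cont_den' hq hp hpq)).intervalIntegrable 0 (2*π))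
        ((continuous_const.mul (cont_den hq hp hpq)).intervalIntegrable 0 (2*π)),
      intervalIntegral.integral_const_mul, intervalIntegral.integral_const_mul,
      C1_val hq hp hpq, C2_val hq hp hpq]
    have hp1 : p + 1 ≠ 0 := by positivity
    field_simp
    ring
  -- derivative of gell
  have hgd : deriv (gell γ) θ = -(γ - γ⁻¹) * Real.sin (2 * θ) := by
    have h : HasDerivAt (gell γ)
        (γ * ((2:ℕ) * Real.cos θ ^ 1 * -Real.sin θ)
          + γ⁻¹ * ((2:ℕ) * Real.sin θ ^ 1 * Real.cos θ)) θ := by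
      exact (((Real.hasDerivAt_cos θ).pow 2).const_mul γ).add
        (((Real.hasDerivAt_sin θ).pow 2).const_mul γ⁻¹)
    rw [h.deriv, Real.sin_two_mul]
    push_cast
    ring
  refine ⟨conj1, hgd, ?_, ?_⟩
  · rw [hJ, hgd]
    have hπ : π ≠ 0 := Real.pi_ne_zero
    have hp1 : p + 1 ≠ 0 := by positivity
    have h1γ : (1:ℝ) + γ ≠ 0 := by positivity
    rw [OmG, hpdef, hqdef]
    field_simp
    ring
  · have hder : ∀ x : ℝ, deriv (fun a => deriv (fun b => Real.sin (b - a)) x) θ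
        = Real.sin (x - θ) := by
      intro x
      have h1 : (fun a : ℝ => deriv (fun b => Real.sin (b - a)) x)
          = fun a => Real.cos (x - a) := by
        funext a
        have h : HasDerivAt (fun b => Real.sin (b - a)) (Real.cos (x - a) * 1) x :=
          by have := (Real.hasDerivAt_sin (x - a)).comp x ((hasDerivAt_id x).sub_const a); exact this
        simpa using h.deriv
      rw [h1]
      have h2 : HasDerivAt (fun a : ℝ => Real.cos (x - a))
          (-Real.sin (x - θ) * (0 - 1)) θ :=
        (Real.hasDerivAt_cos (x - θ)).comp θ ((hasDerivAt_const θ x).sub (hasDerivAt_id θ))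
      simpa using h2.deriv
    have e : (fun θ' => Real.log (M0 γ θ θ') *
          deriv (fun a => deriv (fun b => Real.sin (b - a)) θ') θ)
        = fun θ' => Real.log (M0 γ θ θ') * Real.sin (θ' - θ) := by
      funext x
      rw [hder x]
    rw [e, hJ, hgd]
    have hπ : π ≠ 0 := Real.pi_ne_zero
    have hp1 : p + 1 ≠ 0 := by positivity
    have h1γ : (1:ℝ) + γ ≠ 0 := by positivity
    rw [OmG, hpdef, hqdef]
    field_simp
    ring
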